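/- Let u ∈ X, let U be an open neighborhood of u in X, and let ⟨α⟩ ∈ p⁻¹(u). Then ⟨α,U⟩ ∩ p⁻¹(u) = {⟨α⟩} if and only if π(α,U) ⊆ H. -/

import Mathlib

open unitInterval

noncomputable section

/-- The homotopy class of a loop, as an element of the fundamental group. -/
def pathClass {X : Type*} [TopologicalSpace X] {x : X} (γ : Path x x) :
    FundamentalGroup X x :=
  FundamentalGroup.fromPath (X := TopCat.of X) (Quotient.mk (Path.Homotopic.setoid x x) γ)

/-- A continuous path in `X` starting at the basepoint `x`. -/
structure RawPath (X : Type*) [TopologicalSpace X] (x : X) where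
  toFun : C(unitInterval, X)
  source : toFun 0 = x

variable {X : Type*} [TopologicalSpace X] {x : X}

/-- The endpoint `α(1)` of a path starting at the basepoint. -/
def RawPath.endpt (α : RawPath X x) : X := α.toFun 1

/-- A raw path, as a bundled `Path` from `x` to its endpoint. -/
def RawPath.path (α : RawPath X x) : Path x α.endpt := ⟨α.toFun, α.source, rfl⟩

/-- The relation `α ∼ β` iff `α(1) = β(1)` and `[α · β⁻] ∈ H`. -/
def SpanierRel (H : Subgroup (FundamentalGroup X x)) (α β : RawPath X x) : Prop :=
  ∃ hend : α.endpt = β.endpt,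
    pathClass (α.path.trans (β.path.symm.cast hend rfl)) ∈ H

/-- The space `X̃`: paths starting at `x`, modulo `α ∼ β` iff `α(1) = β(1)`
and `[α · β⁻] ∈ H`. -/
def SpanierSpace (H : Subgroup (FundamentalGroup X x)) : Type _ :=
  Quot (SpanierRel H)

/-- The equivalence class `⟨α⟩ ∈ X̃` of a path `α` starting at `x`. -/
def SpanierSpace.mk (H : Subgroup (FundamentalGroup X x)) (α : RawPath X x) :
    SpanierSpace H :=
  Quot.mk _ α

/-- The endpoint projection `p : X̃ → X`, `p ⟨α⟩ = α(1)`. -/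
def spanierProj (H : Subgroup (FundamentalGroup X x)) : SpanierSpace H → X :=
  Quot.lift RawPath.endpt (fun _ _ hab => by obtain ⟨h, -⟩ := hab; exact h)

/-- The concatenation `α · γ` of a path `α` starting at `x` with a path `γ`
starting at `α(1)`. -/
def RawPath.extend (α : RawPath X x) {y : X} (γ : Path α.endpt y) : RawPath X x :=
  ⟨(α.path.trans γ).toContinuousMap, (α.path.trans γ).source'⟩

/-- The basic set `⟨α,U⟩ = {⟨α·γ⟩ : γ a continuous path in U with γ(0) = α(1)}`. -/
def basicSet (H : Subgroup (FundamentalGroup X x)) (α : RawPath X x) (U : Set X) :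
    Set (SpanierSpace H) :=
  {z | ∃ (y : X) (γ : Path α.endpt y), Set.range γ ⊆ U ∧ z = SpanierSpace.mk H (α.extend γ)}

/-- The topology on `X̃` generated by the basic sets `⟨α,U⟩` with `U` open
and `α(1) ∈ U`. -/
instance spanierTopology (H : Subgroup (FundamentalGroup X x)) :
    TopologicalSpace (SpanierSpace H) :=
  TopologicalSpace.generateFrom
    {S | ∃ (α : RawPath X x) (U : Set X), IsOpen U ∧ α.endpt ∈ U ∧ S = basicSet H α U}

/-- The subgroup-like subset `π(α,U) = [α]·i_#(π₁(U,α(1)))·[α]⁻¹` of `π₁(X,x)`: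
all classes `[α·γ·α⁻]` with `γ` a loop at `α(1)` inside `U`. -/
def piSet (α : RawPath X x) (U : Set X) : Set (FundamentalGroup X x) :=
  {g | ∃ γ : Path α.endpt α.endpt, Set.range γ ⊆ U ∧
    g = pathClass (α.path.trans (γ.trans α.path.symm))}

end


section Helpers

variable {X : Type*} [TopologicalSpace X] {x : X}

attribute [local instance] Path.Homotopic.setoid

lemma pathClass_congr {p q : Path x x} (h : p.Homotopic q) : pathClass p = pathClass q :=
  Quotient.sound h

lemma pathClass_trans (p q : Path x x) : pathClass (p.trans q) = pathClass q * pathClass p :=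
  rfl

lemma pathClass_refl : pathClass (Path.refl x) = 1 :=
  rfl

lemma pathClass_symm_trans_symm {a : X} (p q : Path x a) :
    pathClass (q.trans p.symm) = (pathClass (p.trans q.symm))⁻¹ := by
  apply eq_inv_of_mul_eq_one_left
  rw [← pathClass_trans, ← pathClass_refl]
  apply pathClass_congr
  calc (p.trans q.symm).trans (q.trans p.symm)
      ≈ p.trans (q.symm.trans (q.trans p.symm)) := ⟨Path.Homotopy.transAssoc _ _ _⟩
    _ ≈ p.trans ((q.symm.trans q).trans p.symm) :=
        Path.Homotopic.hcomp (Path.Homotopic.refl p) ⟨(Path.Homotopy.transAssoc _ _ _).symm⟩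
    _ ≈ p.trans ((Path.refl a).trans p.symm) :=
        Path.Homotopic.hcomp (Path.Homotopic.refl p)
          (Path.Homotopic.hcomp ⟨(Path.Homotopy.reflSymmTrans q).symm⟩ (Path.Homotopic.refl _))
    _ ≈ p.trans p.symm :=
        Path.Homotopic.hcomp (Path.Homotopic.refl p) ⟨Path.Homotopy.reflTrans _⟩
    _ ≈ Path.refl x := ⟨(Path.Homotopy.reflTransSymm p).symm⟩

lemma pathClass_trans_trans {a : X} (p q r : Path x a) :
    pathClass (p.trans r.symm) = pathClass (q.trans r.symm) * pathClass (p.trans q.symm) := by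
  rw [← pathClass_trans]
  apply pathClass_congr
  apply Path.Homotopic.symm
  calc (p.trans q.symm).trans (q.trans r.symm)
      ≈ p.trans (q.symm.trans (q.trans r.symm)) := ⟨Path.Homotopy.transAssoc _ _ _⟩
    _ ≈ p.trans ((q.symm.trans q).trans r.symm) :=
        Path.Homotopic.hcomp (Path.Homotopic.refl p) ⟨(Path.Homotopy.transAssoc _ _ _).symm⟩
    _ ≈ p.trans ((Path.refl a).trans r.symm) :=
        Path.Homotopic.hcomp (Path.Homotopic.refl p)
          (Path.Homotopic.hcomp ⟨(Path.Homotopy.reflSymmTrans q).symm⟩ (Path.Homotopic.refl _))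
    _ ≈ p.trans r.symm :=
        Path.Homotopic.hcomp (Path.Homotopic.refl p) ⟨Path.Homotopy.reflTrans _⟩

lemma rel_symm_aux (H : Subgroup (FundamentalGroup X x)) {s t : X}
    (p : Path x s) (q : Path x t) (e : s = t)
    (h : pathClass (p.trans (q.symm.cast e rfl)) ∈ H) :
    pathClass (q.trans (p.symm.cast e.symm rfl)) ∈ H := by
  subst e
  have h' : pathClass (p.trans q.symm) ∈ H := h
  show pathClass (q.trans p.symm) ∈ H
  rw [pathClass_symm_trans_symm]
  exact inv_mem h'

lemma rel_trans_aux (H : Subgroup (FundamentalGroup X x)) {s t w : X}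
    (p : Path x s) (q : Path x t) (r : Path x w) (e1 : s = t) (e2 : t = w)
    (h1 : pathClass (p.trans (q.symm.cast e1 rfl)) ∈ H)
    (h2 : pathClass (q.trans (r.symm.cast e2 rfl)) ∈ H) :
    pathClass (p.trans (r.symm.cast (e1.trans e2) rfl)) ∈ H := by
  subst e1; subst e2
  have h1' : pathClass (p.trans q.symm) ∈ H := h1
  have h2' : pathClass (q.trans r.symm) ∈ H := h2
  show pathClass (p.trans r.symm) ∈ H
  rw [pathClass_trans_trans p q r]
  exact mul_mem h2' h1'

lemma spanierRel_equivalence (H : Subgroup (FundamentalGroup X x)) :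
    Equivalence (SpanierRel H) := by
  constructor
  · intro a
    refine ⟨rfl, ?_⟩
    show pathClass (a.path.trans a.path.symm) ∈ H
    rw [pathClass_congr ⟨(Path.Homotopy.reflTransSymm a.path).symm⟩, pathClass_refl]
    exact one_mem H
  · rintro a b ⟨e, h⟩
    exact ⟨e.symm, rel_symm_aux H a.path b.path e h⟩
  · rintro a b c ⟨e1, h1⟩ ⟨e2, h2⟩
    exact ⟨e1.trans e2, rel_trans_aux H a.path b.path c.path e1 e2 h1 h2⟩

lemma endpt_extend (α : RawPath X x) {y : X} (γ : Path α.endpt y) :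
    (α.extend γ).endpt = y :=
  (α.path.trans γ).target

lemma bridge (α : RawPath X x) (γ : Path α.endpt α.endpt)
    (hend : (α.extend γ).endpt = α.endpt) :
    pathClass ((α.extend γ).path.trans (α.path.symm.cast hend rfl)) =
      pathClass (α.path.trans (γ.trans α.path.symm)) := by
  have h1 : (α.extend γ).path.trans (α.path.symm.cast hend rfl) =
      (α.path.trans γ).trans α.path.symm := rfl
  rw [h1]
  exact pathClass_congr ⟨Path.Homotopy.transAssoc _ _ _⟩

lemma mk_extend_eq (H : Subgroup (FundamentalGroup X x)) (α : RawPath X x) {U : Set X}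
    (hH : piSet α U ⊆ (H : Set (FundamentalGroup X x)))
    (γ : Path α.endpt α.endpt) (hγU : Set.range γ ⊆ U) :
    SpanierSpace.mk H (α.extend γ) = SpanierSpace.mk H α := by
  apply Quot.sound
  refine ⟨endpt_extend α γ, ?_⟩
  rw [bridge α γ (endpt_extend α γ)]
  exact hH ⟨γ, hγU, rfl⟩

end Helpers

/-- For an open neighborhood `U` of `u` and `⟨α⟩ ∈ p⁻¹(u)`, one has
`⟨α,U⟩ ∩ p⁻¹(u) = {⟨α⟩}` if and only if `π(α,U) ⊆ H`. -/
theorem basicSet_inter_fiber_eq_singleton_iff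
    {X : Type*} [TopologicalSpace X] {x : X} (H : Subgroup (FundamentalGroup X x))
    {u : X} {U : Set X} (hUopen : IsOpen U) (hu : u ∈ U)
    (α : RawPath X x) (hα : α.endpt = u) :
    basicSet H α U ∩ spanierProj H ⁻¹' {u} = {SpanierSpace.mk H α} ↔
      piSet α U ⊆ (H : Set (FundamentalGroup X x)) := by
  constructor
  · intro hset g hg
    obtain ⟨γ, hγU, rfl⟩ := hg
    have hz : SpanierSpace.mk H (α.extend γ) ∈ basicSet H α U ∩ spanierProj H ⁻¹' {u} := by
      refine ⟨⟨α.endpt, γ, hγU, rfl⟩, ?_⟩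
      show (α.extend γ).endpt = u
      rw [endpt_extend α γ, hα]
    rw [hset] at hz
    have heq : SpanierSpace.mk H (α.extend γ) = SpanierSpace.mk H α := hz
    have hrel : SpanierRel H (α.extend γ) α :=
      ((spanierRel_equivalence H).eqvGen_iff).mp (Quot.eq.mp heq)
    obtain ⟨hend, hmem⟩ := hrel
    rwa [bridge α γ hend] at hmem
  · intro hH
    apply Set.eq_singleton_iff_unique_mem.mpr
    constructor
    · refine ⟨⟨α.endpt, Path.refl α.endpt, ?_, ?_⟩, hα⟩
      · intro z hz
        obtain ⟨t, rfl⟩ := hz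
        simpa [hα] using hu
      · exact (mk_extend_eq H α hH (Path.refl α.endpt) (by
          intro z hz; obtain ⟨t, rfl⟩ := hz; simpa [hα] using hu)).symm
    · rintro z ⟨⟨y, γ, hγU, rfl⟩, hproj⟩
      have hy : y = α.endpt := by
        have h1 : (α.extend γ).endpt = u := hproj
        rw [endpt_extend α γ] at h1
        rw [h1, hα]
      subst hy
      exact mk_extend_eq H α hH γ hγU
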